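/- Fix n ≥ 2 and β ∈ ℂ with e^{-β} ≠ 1. For each n-th root of unity z and each integer m, the function φ_{z,m}(t,h) := n^{-1/2} z^h e^{-2πi m t} on [0,1) × ℤ/nℤ is an eigenfunction of the integral operator C^{β,θ₂} defined by (C^{β,θ₂} f)(t,h) = Σ_{h'} ∫₀¹ e^{θ₂ π i/n} 1{h' = h+1 mod n} · (e^{-β[t'-t]}/(1-e^{-β})) f(t',h') dt', with eigenvalue e^{θ₂ π i/n} z / (β + 2πi m), where [s] := s + 1{s < 0} denotes the residue of s mod 1. -/

import Mathlib

/-- The residue mod 1 of a real number `s ∈ (-1,1)`: `[s] = s + 1_{s<0}`. -/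
noncomputable def resMod1 (s : ℝ) : ℝ := s + (if s < 0 then 1 else 0)

/-- The eigenfunction `φ_{z,m}(t,h) = n^{-1/2} z^h e^{-2πimt}` on `[0,1) × ℤ/nℤ`. -/
noncomputable def phiEig (n : ℕ) (z : ℂ) (m : ℤ) (t : ℝ) (h : ZMod n) : ℂ :=
  ((1 / Real.sqrt n : ℝ) : ℂ) * z ^ (h.val) *
    Complex.exp (-2 * Real.pi * Complex.I * (m : ℂ) * (t : ℂ))


open intervalIntegral in
lemma key_integral_aux (β : ℂ) (hβ : Complex.exp (-β) ≠ 1) (m : ℤ) (t : ℝ)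
    (ht : t ∈ Set.Ico (0 : ℝ) 1) :
    ∫ t' in (0 : ℝ)..1,
        Complex.exp (-β * ((resMod1 (t' - t) : ℝ) : ℂ)) *
          Complex.exp (-2 * Real.pi * Complex.I * (m : ℂ) * (t' : ℂ))
      = (1 - Complex.exp (-β)) * Complex.exp (-2 * Real.pi * Complex.I * (m : ℂ) * (t : ℂ))
          / (β + 2 * Real.pi * Complex.I * (m : ℂ)) := by
  obtain ⟨ht0, ht1⟩ := ht
  set c : ℂ := β + 2 * Real.pi * Complex.I * (m : ℂ) with hc_def
  have hc : c ≠ 0 := by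
    intro h0
    apply hβ
    have hb : -β = 2 * Real.pi * Complex.I * (m : ℂ) := by
      rw [hc_def] at h0; linear_combination -h0
    rw [hb]
    have := Complex.exp_int_mul_two_pi_mul_I m
    rw [← this]
    congr 1
    push_cast
    ring
  set f : ℝ → ℂ := fun t' => Complex.exp (-β * ((resMod1 (t' - t) : ℝ) : ℂ)) *
      Complex.exp (-2 * Real.pi * Complex.I * (m : ℂ) * (t' : ℂ)) with hf_def
  set g0 : ℝ → ℂ := fun t' => Complex.exp (β * (t - 1)) * Complex.exp (-c * t') with hg0_def
  set g1 : ℝ → ℂ := fun t' => Complex.exp (β * t) * Complex.exp (-c * t') with hg1_def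
  have hfg0 : ∀ t', t' < t → f t' = g0 t' := by
    intro t' h'
    simp only [hf_def, hg0_def, resMod1, if_pos (by linarith : t' - t < 0)]
    rw [← Complex.exp_add, ← Complex.exp_add]
    push_cast
    ring_nf
    congr 1; rw [hc_def]; ring
  have hfg1 : ∀ t', t ≤ t' → f t' = g1 t' := by
    intro t' h'
    simp only [hf_def, hg1_def, resMod1, if_neg (by linarith : ¬ t' - t < 0)]
    rw [← Complex.exp_add, ← Complex.exp_add]
    push_cast
    ring_nf
    congr 1; rw [hc_def]; ring
  -- integrability
  have hg0i : IntervalIntegrable g0 MeasureTheory.volume 0 t :=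
    (Continuous.intervalIntegrable (by fun_prop) _ _)
  have hg1i : IntervalIntegrable g1 MeasureTheory.volume t 1 :=
    (Continuous.intervalIntegrable (by fun_prop) _ _)
  have hae0 : f =ᵐ[MeasureTheory.volume.restrict (Set.uIoc (0:ℝ) t)] g0 := by
    have hs : MeasureTheory.volume ({t} : Set ℝ) = 0 := MeasureTheory.measure_singleton t
    refine (MeasureTheory.ae_restrict_iff' measurableSet_uIoc).2 ?_
    filter_upwards [MeasureTheory.measure_eq_zero_iff_ae_notMem.mp hs] with x hx hmem
    have : x ≠ t := hx
    rw [Set.uIoc_of_le ht0] at hmem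
    exact hfg0 x (lt_of_le_of_ne hmem.2 this)
  have hfi0 : IntervalIntegrable f MeasureTheory.volume 0 t :=
    hg0i.congr_ae hae0.symm
  have hae1 : ∀ t' ∈ Set.uIcc t 1, f t' = g1 t' := by
    intro x hx
    rw [Set.uIcc_of_le (le_of_lt ht1)] at hx
    exact hfg1 x hx.1
  have hfi1 : IntervalIntegrable f MeasureTheory.volume t 1 :=
    hg1i.congr_ae ((MeasureTheory.ae_restrict_iff' measurableSet_uIoc).2
      (MeasureTheory.ae_of_all _ fun x hx => by
        rw [Set.uIoc_of_le (le_of_lt ht1)] at hx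
        exact (hfg1 x (le_of_lt hx.1)).symm))
  have hsplit : ∫ t' in (0:ℝ)..1, f t' = (∫ t' in (0:ℝ)..t, f t') + ∫ t' in t..(1:ℝ), f t' :=
    (integral_add_adjacent_intervals hfi0 hfi1).symm
  have hI0 : ∫ t' in (0:ℝ)..t, f t' = ∫ t' in (0:ℝ)..t, g0 t' := by
    refine integral_congr_ae ?_
    filter_upwards [MeasureTheory.measure_eq_zero_iff_ae_notMem.mp
      (MeasureTheory.measure_singleton t)] with x hx hmem
    rw [Set.uIoc_of_le ht0] at hmem
    exact hfg0 x (lt_of_le_of_ne hmem.2 hx)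
  have hI1 : ∫ t' in t..(1:ℝ), f t' = ∫ t' in t..(1:ℝ), g1 t' :=
    integral_congr hae1
  have hg0v : ∫ t' in (0:ℝ)..t, g0 t'
      = Complex.exp (β * (t - 1)) * ((Complex.exp (-c * t) - Complex.exp (-c * (0:ℝ))) / (-c)) := by
    simp only [hg0_def]
    rw [integral_const_mul, integral_exp_mul_complex (neg_ne_zero.mpr hc)]
  have hg1v : ∫ t' in t..(1:ℝ), g1 t'
      = Complex.exp (β * t) * ((Complex.exp (-c * (1:ℝ)) - Complex.exp (-c * t)) / (-c)) := by
    simp only [hg1_def]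
    rw [integral_const_mul, integral_exp_mul_complex (neg_ne_zero.mpr hc)]
  have E1 : Complex.exp (β * t) * Complex.exp (-c * ((1:ℝ) : ℂ)) = Complex.exp (β * ((t:ℂ) - 1)) := by
    rw [← Complex.exp_add]
    have he : β * t + (-c * ((1:ℝ):ℂ)) = β * ((t:ℂ) - 1) + ((-m : ℤ) : ℂ) * (2 * Real.pi * Complex.I) := by
      rw [hc_def]; push_cast; ring
    rw [he, Complex.exp_add, Complex.exp_int_mul_two_pi_mul_I, mul_one]
  have E2 : Complex.exp (β * t) * Complex.exp (-c * (t:ℂ))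
      = Complex.exp (-2 * Real.pi * Complex.I * (m : ℂ) * (t : ℂ)) := by
    rw [← Complex.exp_add]; congr 1; rw [hc_def]; ring
  have E3 : Complex.exp (β * ((t:ℂ) - 1)) * Complex.exp (-c * (t:ℂ))
      = Complex.exp (-β) * Complex.exp (-2 * Real.pi * Complex.I * (m : ℂ) * (t : ℂ)) := by
    rw [← Complex.exp_add, ← Complex.exp_add]
    congr 1
    rw [hc_def]; ring
  show (∫ t' in (0:ℝ)..1, f t') = _
  rw [hsplit, hI0, hI1, hg0v, hg1v]
  rw [Complex.ofReal_zero, mul_zero, Complex.exp_zero]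
  set A0 := Complex.exp (β * ((t:ℂ) - 1)) with hA0
  set A1 := Complex.exp (β * (t:ℂ)) with hA1
  set X := Complex.exp (-c * (t:ℂ)) with hX
  set Y := Complex.exp (-c * ((1:ℝ):ℂ)) with hY
  set B := Complex.exp (-2 * Real.pi * Complex.I * (m : ℂ) * (t : ℂ)) with hB
  set Eb := Complex.exp (-β) with hEb
  have hrw : A0 * ((X - 1) / -c) + A1 * ((Y - X) / -c)
      = (A0 * (X - 1) + A1 * (Y - X)) / (-c) := by ring
  rw [hrw, div_eq_div_iff (neg_ne_zero.mpr hc) hc]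
  linear_combination c * (E3 + E1 - E2)

lemma beta_add_ne_zero_aux (β : ℂ) (hβ : Complex.exp (-β) ≠ 1) (m : ℤ) :
    β + 2 * Real.pi * Complex.I * (m : ℂ) ≠ 0 := by
  intro h0
  apply hβ
  have hb : -β = ((m : ℤ) : ℂ) * (2 * Real.pi * Complex.I) := by push_cast; linear_combination -h0
  rw [hb, Complex.exp_int_mul_two_pi_mul_I]

lemma pow_val_add_one_aux (n : ℕ) [NeZero n] (hn : 2 ≤ n) (z : ℂ) (hz : z ^ n = 1)
    (h : ZMod n) : z ^ ((h + 1 : ZMod n).val) = z * z ^ h.val := by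
  haveI : Fact (1 < n) := ⟨hn⟩
  have hmod : ∀ a : ℕ, z ^ (a % n) = z ^ a := by
    intro a
    conv_rhs => rw [← Nat.mod_add_div a n]
    rw [pow_add, pow_mul, hz, one_pow, mul_one]
  rw [ZMod.val_add, hmod, ZMod.val_one, pow_succ]
  ring

/-- `φ_{z,m}` is an eigenfunction of the operator `C^{β,θ₂}` with eigenvalue
`e^{θ₂πi/n} z/(β + 2πim)`. -/
theorem phi_eigenfunction (n : ℕ) [NeZero n] (hn : 2 ≤ n) (θ₂ : ℕ) (hθ : θ₂ = 0 ∨ θ₂ = 1)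
    (β : ℂ) (hβ : Complex.exp (-β) ≠ 1) (z : ℂ) (hz : z ^ n = 1) (m : ℤ)
    (t : ℝ) (ht : t ∈ Set.Ico (0 : ℝ) 1) (h : ZMod n) :
    ∑ h' : ZMod n, ∫ t' in (0 : ℝ)..1,
        Complex.exp ((θ₂ : ℂ) * Real.pi * Complex.I / n) *
        (if h' = h + 1 then 1 else 0) *
        (Complex.exp (-β * ((resMod1 (t' - t) : ℝ) : ℂ)) / (1 - Complex.exp (-β))) *
        phiEig n z m t' h'
    = (Complex.exp ((θ₂ : ℂ) * Real.pi * Complex.I / n) * z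
        / (β + 2 * Real.pi * Complex.I * (m : ℂ))) * phiEig n z m t h := by
  have hc : β + 2 * Real.pi * Complex.I * (m : ℂ) ≠ 0 := beta_add_ne_zero_aux β hβ m
  have h1E : (1 : ℂ) - Complex.exp (-β) ≠ 0 := sub_ne_zero.mpr (Ne.symm hβ)
  rw [Finset.sum_eq_single_of_mem (h + 1) (Finset.mem_univ _)
    (fun b _ hb => by simp [hb])]
  simp only [eq_self_iff_true, if_true, mul_one]
  have hpt : ∀ t' : ℝ,
      Complex.exp ((θ₂ : ℂ) * Real.pi * Complex.I / n) *
        (Complex.exp (-β * ((resMod1 (t' - t) : ℝ) : ℂ)) / (1 - Complex.exp (-β))) *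
        phiEig n z m t' (h + 1)
      = (Complex.exp ((θ₂ : ℂ) * Real.pi * Complex.I / n) * ((1 / Real.sqrt n : ℝ) : ℂ) *
          z ^ ((h + 1 : ZMod n).val) / (1 - Complex.exp (-β))) *
        (Complex.exp (-β * ((resMod1 (t' - t) : ℝ) : ℂ)) *
          Complex.exp (-2 * Real.pi * Complex.I * (m : ℂ) * (t' : ℂ))) := by
    intro t'
    simp only [phiEig]
    ring
  simp only [hpt]
  rw [intervalIntegral.integral_const_mul, key_integral_aux β hβ m t ht,
    pow_val_add_one_aux n hn z hz h]
  have hn0 : (0:ℝ) < (n:ℝ) := by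
    have : (2:ℝ) ≤ (n:ℝ) := by exact_mod_cast hn
    linarith
  have hs : Real.sqrt (n:ℝ) ≠ 0 := ne_of_gt (Real.sqrt_pos.mpr hn0)
  have hsC : ((Real.sqrt (n:ℝ) : ℝ) : ℂ) ≠ 0 := Complex.ofReal_ne_zero.mpr hs
  simp only [phiEig]
  push_cast
  field_simp
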